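/- Let n, K, L be natural numbers with n ≥ 1, let Z : Fin n → ℝ take only the values 0 and 1, and let c : Fin n → Fin K → ℝ and g : Fin n → Fin L → ℝ. Let ρ : ℝ → ℝ be differentiable. Define the dual objective q : (Fin K → ℝ) × (Fin K → ℝ) × (Fin L → ℝ) → ℝ by q(α₀, α₁, γ) = (1/n)·Σᵢ [ −Zᵢ·ρ(⟨α₁, c i⟩ + ⟨γ, g i⟩) − (1 − Zᵢ)·ρ(⟨α₀, c i⟩ − ⟨γ, g i⟩) + ⟨α₁, c i⟩ + ⟨α₀, c i⟩ ]. If the Fréchet derivative of q vanishes at (α̂₀, α̂₁, γ̂), then the weights w*ᵢ = Zᵢ·ρ′(⟨α̂₁, c i⟩ + ⟨γ̂, g i⟩) + (1 − Zᵢ)·ρ′(⟨α̂₀, c i⟩ − ⟨γ̂, g i⟩) satisfy the balance constraints: for every k, (1/n)·Σᵢ w*ᵢ·Zᵢ·c i k = (1/n)·Σᵢ c i k and (1/n)·Σᵢ w*ᵢ·(1−Zᵢ)·c i k = (1/n)·Σᵢ c i k, and for every l, Σᵢ w*ᵢ·Zᵢ·g i l = Σᵢ w*ᵢ·(1−Zᵢ)·g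 i l. -/

import Mathlib

theorem stmt_5 (n K L : ℕ) (hn : 1 ≤ n) (Z : Fin n → ℝ)
    (hZ : ∀ i, Z i = 0 ∨ Z i = 1)
    (c : Fin n → Fin K → ℝ) (g : Fin n → Fin L → ℝ)
    (ρ : ℝ → ℝ) (hρ : Differentiable ℝ ρ)
    (q : (Fin K → ℝ) × (Fin K → ℝ) × (Fin L → ℝ) → ℝ)
    (hq : ∀ p : (Fin K → ℝ) × (Fin K → ℝ) × (Fin L → ℝ),
      q p = (1 / (n : ℝ)) * ∑ i,
        (-(Z i) * ρ ((∑ k, p.2.1 k * c i k) + ∑ l, p.2.2 l * g i l)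
          - (1 - Z i) * ρ ((∑ k, p.1 k * c i k) - ∑ l, p.2.2 l * g i l)
          + (∑ k, p.2.1 k * c i k) + ∑ k, p.1 k * c i k))
    (a0 a1 : Fin K → ℝ) (gam : Fin L → ℝ)
    (hcrit : fderiv ℝ q (a0, a1, gam) = 0)
    (wstar : Fin n → ℝ)
    (hwstar : ∀ i, wstar i =
      Z i * deriv ρ ((∑ k, a1 k * c i k) + ∑ l, gam l * g i l)
        + (1 - Z i) * deriv ρ ((∑ k, a0 k * c i k) - ∑ l, gam l * g i l)) :
    (∀ k, (1 / (n : ℝ)) * ∑ i, wstar i * Z i * c i k = (1 / (n : ℝ)) * ∑ i, c i k) ∧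
    (∀ k, (1 / (n : ℝ)) * ∑ i, wstar i * (1 - Z i) * c i k = (1 / (n : ℝ)) * ∑ i, c i k) ∧
    (∀ l, ∑ i, wstar i * Z i * g i l = ∑ i, wstar i * (1 - Z i) * g i l) := by
  have hn' : (n : ℝ) ≠ 0 := Nat.cast_ne_zero.mpr (by omega)
  have hqeq : q = fun p : (Fin K → ℝ) × (Fin K → ℝ) × (Fin L → ℝ) =>
      (1 / (n : ℝ)) * ∑ i,
        (-(Z i) * ρ ((∑ k, p.2.1 k * c i k) + ∑ l, p.2.2 l * g i l)
          - (1 - Z i) * ρ ((∑ k, p.1 k * c i k) - ∑ l, p.2.2 l * g i l)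
          + (∑ k, p.2.1 k * c i k) + ∑ k, p.1 k * c i k) := funext hq
  have hqdiff : DifferentiableAt ℝ q (a0, a1, gam) := by
    rw [hqeq]; fun_prop
  have haff : ∀ A B : ℝ, HasDerivAt (fun t : ℝ => A + t * B) B 0 := by
    intro A B
    simpa using ((hasDerivAt_id (0:ℝ)).mul_const B).const_add A
  have hsplit : ∀ (m : ℕ) (a w cc : Fin m → ℝ) (t : ℝ),
      (∑ k, (a k + t * w k) * cc k)
        = (∑ k, a k * cc k) + t * ∑ k, w k * cc k := by
    intro m a w cc t
    rw [Finset.mul_sum, ← Finset.sum_add_distrib]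
    exact Finset.sum_congr rfl fun k _ => by ring
  have key : ∀ (v0 v1 : Fin K → ℝ) (v2 : Fin L → ℝ),
      (1 / (n : ℝ)) * ∑ i,
        (-(Z i) * (deriv ρ ((∑ k, a1 k * c i k) + ∑ l, gam l * g i l)
              * ((∑ k, v1 k * c i k) + ∑ l, v2 l * g i l))
          - (1 - Z i) * (deriv ρ ((∑ k, a0 k * c i k) - ∑ l, gam l * g i l)
              * ((∑ k, v0 k * c i k) - ∑ l, v2 l * g i l))
          + (∑ k, v1 k * c i k) + ∑ k, v0 k * c i k) = 0 := by
    intro v0 v1 v2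
    set v : (Fin K → ℝ) × (Fin K → ℝ) × (Fin L → ℝ) := (v0, v1, v2) with hv
    have hline : HasDerivAt (fun t : ℝ => (a0, a1, gam) + t • v) v 0 := by
      simpa using ((hasDerivAt_id (0:ℝ)).smul_const v).const_add (a0, a1, gam)
    have h1 : HasDerivAt (fun t : ℝ => q ((a0, a1, gam) + t • v)) 0 0 := by
      have h := hqdiff.hasFDerivAt.comp_hasDerivAt_of_eq 0 hline (by simp)
      simp only [hcrit, ContinuousLinearMap.zero_apply] at h
      exact h
    have hfun : (fun t : ℝ => q ((a0, a1, gam) + t • v)) = fun t : ℝ =>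
        (1 / (n : ℝ)) * ∑ i,
          (-(Z i) * ρ (((∑ k, a1 k * c i k) + t * ∑ k, v1 k * c i k)
                + ((∑ l, gam l * g i l) + t * ∑ l, v2 l * g i l))
            - (1 - Z i) * ρ (((∑ k, a0 k * c i k) + t * ∑ k, v0 k * c i k)
                - ((∑ l, gam l * g i l) + t * ∑ l, v2 l * g i l))
            + ((∑ k, a1 k * c i k) + t * ∑ k, v1 k * c i k)
            + ((∑ k, a0 k * c i k) + t * ∑ k, v0 k * c i k)) := by
      funext t
      rw [hq]
      simp only [hv, Prod.fst_add, Prod.snd_add, Prod.smul_fst, Prod.smul_snd,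
        Pi.add_apply, Pi.smul_apply, smul_eq_mul, hsplit]
    have h2 : HasDerivAt (fun t : ℝ => q ((a0, a1, gam) + t • v))
        ((1 / (n : ℝ)) * ∑ i,
          (-(Z i) * (deriv ρ ((∑ k, a1 k * c i k) + ∑ l, gam l * g i l)
              * ((∑ k, v1 k * c i k) + ∑ l, v2 l * g i l))
          - (1 - Z i) * (deriv ρ ((∑ k, a0 k * c i k) - ∑ l, gam l * g i l)
              * ((∑ k, v0 k * c i k) - ∑ l, v2 l * g i l))
          + (∑ k, v1 k * c i k) + ∑ k, v0 k * c i k)) 0 := by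
      rw [hfun]
      refine HasDerivAt.const_mul _ (HasDerivAt.fun_sum fun i _ => ?_)
      have hi1 : HasDerivAt (fun t : ℝ =>
          ρ (((∑ k, a1 k * c i k) + t * ∑ k, v1 k * c i k)
            + ((∑ l, gam l * g i l) + t * ∑ l, v2 l * g i l)))
          (deriv ρ ((∑ k, a1 k * c i k) + ∑ l, gam l * g i l)
            * ((∑ k, v1 k * c i k) + ∑ l, v2 l * g i l)) 0 := by
        have hin := (haff (∑ k, a1 k * c i k) (∑ k, v1 k * c i k)).add
          (haff (∑ l, gam l * g i l) (∑ l, v2 l * g i l))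
        have := (hρ _).hasDerivAt.comp 0 hin
        simp only [Pi.add_apply, Pi.sub_apply, zero_mul, add_zero] at this
        exact this
      have hi0 : HasDerivAt (fun t : ℝ =>
          ρ (((∑ k, a0 k * c i k) + t * ∑ k, v0 k * c i k)
            - ((∑ l, gam l * g i l) + t * ∑ l, v2 l * g i l)))
          (deriv ρ ((∑ k, a0 k * c i k) - ∑ l, gam l * g i l)
            * ((∑ k, v0 k * c i k) - ∑ l, v2 l * g i l)) 0 := by
        have hin := (haff (∑ k, a0 k * c i k) (∑ k, v0 k * c i k)).sub
          (haff (∑ l, gam l * g i l) (∑ l, v2 l * g i l))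
        have := (hρ _).hasDerivAt.comp 0 hin
        simp only [Pi.add_apply, Pi.sub_apply, zero_mul, add_zero] at this
        exact this
      exact (((hi1.const_mul (-(Z i))).sub (hi0.const_mul (1 - Z i))).add
        (haff _ _)).add (haff _ _)
    exact h2.unique h1
  have hw1 : ∀ i, wstar i * Z i
      = Z i * deriv ρ ((∑ k, a1 k * c i k) + ∑ l, gam l * g i l) := by
    intro i; rcases hZ i with h | h <;> simp [hwstar i, h]
  have hw0 : ∀ i, wstar i * (1 - Z i)
      = (1 - Z i) * deriv ρ ((∑ k, a0 k * c i k) - ∑ l, gam l * g i l) := by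
    intro i; rcases hZ i with h | h <;> simp [hwstar i, h]
  refine ⟨fun k => ?_, fun k => ?_, fun l => ?_⟩
  · have hkey := key 0 (fun j => if j = k then 1 else 0) 0
    simp only [Pi.zero_apply, zero_mul, Finset.sum_const_zero, ite_mul, one_mul,
      Finset.sum_ite_eq', Finset.mem_univ, if_true, add_zero, sub_zero, mul_zero,
      sub_zero, zero_add] at hkey
    have h0 : (∑ i, (-(Z i) * (deriv ρ ((∑ k, a1 k * c i k) + ∑ l, gam l * g i l)
        * c i k) + c i k)) = 0 := by
      rcases mul_eq_zero.mp hkey with h | h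
      · exact absurd h (by positivity)
      · exact h
    have h1 : (∑ i, (-(Z i) * (deriv ρ ((∑ k, a1 k * c i k) + ∑ l, gam l * g i l)
        * c i k) + c i k)) = (∑ i, c i k) - ∑ i, wstar i * Z i * c i k := by
      rw [← Finset.sum_sub_distrib]
      exact Finset.sum_congr rfl fun i _ => by rw [hw1 i]; ring
    rw [h1] at h0
    have : ∑ i, wstar i * Z i * c i k = ∑ i, c i k := by linarith
    rw [this]
  · have hkey := key (fun j => if j = k then 1 else 0) 0 0
    simp only [Pi.zero_apply, zero_mul, Finset.sum_const_zero, ite_mul, one_mul,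
      Finset.sum_ite_eq', Finset.mem_univ, if_true, add_zero, sub_zero, mul_zero,
      sub_zero, zero_add] at hkey
    have h0 : (∑ i, (-(1 - Z i) * (deriv ρ ((∑ k, a0 k * c i k) - ∑ l, gam l * g i l)
        * c i k) + c i k)) = 0 := by
      rcases mul_eq_zero.mp hkey with h | h
      · exact absurd h (by positivity)
      · rw [← h]
        all_goals exact Finset.sum_congr rfl fun i _ => by ring
    have h1 : (∑ i, (-(1 - Z i) * (deriv ρ ((∑ k, a0 k * c i k) - ∑ l, gam l * g i l)
        * c i k) + c i k)) = (∑ i, c i k) - ∑ i, wstar i * (1 - Z i) * c i k := by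
      rw [← Finset.sum_sub_distrib]
      exact Finset.sum_congr rfl fun i _ => by rw [hw0 i]; ring
    rw [h1] at h0
    have : ∑ i, wstar i * (1 - Z i) * c i k = ∑ i, c i k := by linarith
    rw [this]
  · have hkey := key 0 0 (fun j => if j = l then 1 else 0)
    simp only [Pi.zero_apply, zero_mul, Finset.sum_const_zero, ite_mul, one_mul,
      Finset.sum_ite_eq', Finset.mem_univ, if_true, add_zero, sub_zero, mul_zero,
      zero_add, zero_sub] at hkey
    have h0 : (∑ i, (-(Z i) * (deriv ρ ((∑ k, a1 k * c i k) + ∑ l, gam l * g i l)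
          * g i l)
        - (1 - Z i) * (deriv ρ ((∑ k, a0 k * c i k) - ∑ l, gam l * g i l)
          * -(g i l)))) = 0 := by
      rcases mul_eq_zero.mp hkey with h | h
      · exact absurd h (by positivity)
      · rw [← h]
    have h1 : (∑ i, (-(Z i) * (deriv ρ ((∑ k, a1 k * c i k) + ∑ l, gam l * g i l)
          * g i l)
        - (1 - Z i) * (deriv ρ ((∑ k, a0 k * c i k) - ∑ l, gam l * g i l)
          * -(g i l)))) = (∑ i, wstar i * (1 - Z i) * g i l)
          - ∑ i, wstar i * Z i * g i l := by
      rw [← Finset.sum_sub_distrib]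
      exact Finset.sum_congr rfl fun i _ => by rw [hw0 i, hw1 i]; ring
    rw [h1] at h0
    linarith
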